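/- Let T be a finite tree in which every non-leaf vertex has degree at least 3, and let e = uv be an edge both of whose endpoints u, v are non-leaf vertices. Then there exist leaves a, b, c, d of T such that the unique path from a to b and the unique path from c to d both contain the edge e, and e is the only edge they have in common. -/

import Mathlib

open SimpleGraph

/-- In a tree, if `b` is a neighbor of `x` appearing on a path starting at `x`, then `b`
is the second vertex of that path. -/
private lemma tree_getVert_one {V : Type} [DecidableEq V] {G : SimpleGraph V} (hT : G.IsTree)
    {x y b : V} {p : G.Walk x y} (hp : p.IsPath) (hb : G.Adj x b) (hmem : b ∈ p.support) :
    p.getVert 1 = b := by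
  have hq : (Walk.cons hb Walk.nil : G.Walk x b).IsPath := by
    rw [Walk.cons_isPath_iff]
    exact ⟨Walk.IsPath.nil, by simp [hb.ne]⟩
  have heq : p.takeUntil b hmem = Walk.cons hb Walk.nil :=
    (hT.existsUnique_path x b).unique (hp.takeUntil hmem) hq
  have hspec := p.take_spec hmem
  rw [heq] at hspec
  rw [← hspec, Walk.cons_append, Walk.getVert_cons_succ, Walk.getVert_zero]

/-- In a tree, two paths out of `u` with distinct second vertices share only the vertex `u`. -/
private lemma tree_same_side {V : Type} [DecidableEq V] {G : SimpleGraph V} (hT : G.IsTree)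
    {u a b x : V} {p : G.Walk u a} {q : G.Walk u b}
    (hp : p.IsPath) (hq : q.IsPath) (hne : p.getVert 1 ≠ q.getVert 1)
    (hxp : x ∈ p.support) (hxq : x ∈ q.support) : x = u := by
  by_contra hxu
  have hr : (p.takeUntil x hxp).IsPath := hp.takeUntil hxp
  have hr2 : q.takeUntil x hxq = p.takeUntil x hxp :=
    (hT.existsUnique_path u x).unique (hq.takeUntil hxq) hr
  have hlen : 0 < (p.takeUntil x hxp).length := by
    rcases Nat.eq_zero_or_pos (p.takeUntil x hxp).length with h | h
    · exact absurd (Walk.exists_length_eq_zero_iff.mp ⟨p.takeUntil x hxp, h⟩).symm hxu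
    · exact h
  have hadj : G.Adj u ((p.takeUntil x hxp).getVert 1) := by
    simpa using (p.takeUntil x hxp).adj_getVert_succ hlen
  have hmem : (p.takeUntil x hxp).getVert 1 ∈ (p.takeUntil x hxp).support :=
    Walk.mem_support_iff_exists_getVert.mpr ⟨1, rfl, hlen⟩
  have h1 : p.getVert 1 = (p.takeUntil x hxp).getVert 1 :=
    tree_getVert_one hT hp hadj (p.support_takeUntil_subset hxp hmem)
  have h2 : q.getVert 1 = (p.takeUntil x hxp).getVert 1 := by
    refine tree_getVert_one hT hq hadj (q.support_takeUntil_subset hxq ?_)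
    rw [hr2]; exact hmem
  exact hne (h1.trans h2.symm)

/-- In a tree, two paths out of `u` with distinct second vertices share no edge. -/
private lemma tree_same_side_edges {V : Type} [DecidableEq V] {G : SimpleGraph V} (hT : G.IsTree)
    {u a b : V} {p : G.Walk u a} {q : G.Walk u b}
    (hp : p.IsPath) (hq : q.IsPath) (hne : p.getVert 1 ≠ q.getVert 1)
    {e : Sym2 V} (hep : e ∈ p.edges) (heq : e ∈ q.edges) : False := by
  induction e with
  | _ x y =>
    have hadj : G.Adj x y := p.adj_of_mem_edges hep
    have hxu : x = u := tree_same_side hT hp hq hne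
      (p.fst_mem_support_of_mem_edges hep) (q.fst_mem_support_of_mem_edges heq)
    have hyu : y = u := tree_same_side hT hp hq hne
      (p.snd_mem_support_of_mem_edges hep) (q.snd_mem_support_of_mem_edges heq)
    exact hadj.ne (hxu.trans hyu.symm)

/-- In a tree, a path out of `u` not heading to `v` and a path out of `v` not heading to `u`
(for an edge `uv`) have disjoint supports. -/
private lemma tree_cross_side {V : Type} [DecidableEq V] {G : SimpleGraph V} (hT : G.IsTree)
    {u v a c x : V} (huv : G.Adj u v) {p : G.Walk u a} {q : G.Walk v c}
    (hp : p.IsPath) (hq : q.IsPath) (hpv : p.getVert 1 ≠ v) (hqu : q.getVert 1 ≠ u)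
    (hxp : x ∈ p.support) (hxq : x ∈ q.support) : False := by
  have hvp : v ∉ p.support := fun h => hpv (tree_getVert_one hT hp huv h)
  have huq : u ∉ q.support := fun h => hqu (tree_getVert_one hT hq huv.symm h)
  have hr2 : (Walk.cons huv (q.takeUntil x hxq)).IsPath :=
    (hq.takeUntil hxq).cons (fun h => huq (q.support_takeUntil_subset hxq h))
  have heq : p.takeUntil x hxp = Walk.cons huv (q.takeUntil x hxq) :=
    (hT.existsUnique_path u x).unique (hp.takeUntil hxp) hr2
  have hvmem : v ∈ (p.takeUntil x hxp).support := by
    rw [heq, Walk.support_cons]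
    exact List.mem_cons_of_mem _ (q.takeUntil x hxq).start_mem_support
  exact hvp (p.support_takeUntil_subset hxp hvmem)

/-- From any edge `u u1` of a tree whose non-leaf vertices have degree at least 3, there is
a path from `u` to a leaf whose second vertex is `u1`. -/
private lemma exists_leaf_path {V : Type} [Fintype V] [DecidableEq V] {G : SimpleGraph V}
    [DecidableRel G.Adj] (hT : G.IsTree) (hdeg : ∀ x, G.degree x ≠ 1 → 3 ≤ G.degree x)
    {u u1 : V} (h1 : G.Adj u u1) :
    ∃ (a : V) (p : G.Walk u a), G.degree a = 1 ∧ p.IsPath ∧ p.getVert 1 = u1 := by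
  classical
  choose pw hspec using hT.existsUnique_path u
  set f : V → ℕ := fun x => if u1 ∈ (pw x).support then (pw x).length else 0 with hf
  obtain ⟨a, -, hmax⟩ := Finset.exists_max_image Finset.univ f ⟨u1, Finset.mem_univ u1⟩
  have hfu1 : f u1 = (pw u1).length := if_pos (pw u1).end_mem_support
  have hu1a : u1 ∈ (pw a).support := by
    by_contra hcon
    have h0 : f a = 0 := if_neg hcon
    have hle : f u1 ≤ f a := hmax u1 (Finset.mem_univ u1)
    have hpos : 0 < (pw u1).length := by
      rcases Nat.eq_zero_or_pos (pw u1).length with h | h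
      · exact absurd (Walk.exists_length_eq_zero_iff.mp ⟨pw u1, h⟩) h1.ne
      · exact h
    omega
  have hpa : (pw a).IsPath := (hspec a).1
  have hg1 : (pw a).getVert 1 = u1 := tree_getVert_one hT hpa h1 hu1a
  refine ⟨a, pw a, ?_, hpa, hg1⟩
  by_contra hdeg_a
  have h3 : 3 ≤ G.degree a := hdeg a hdeg_a
  have hcard : 0 < ((G.neighborFinset a).erase ((pw a).reverse.getVert 1)).card := by
    have := Finset.pred_card_le_card_erase
      (s := G.neighborFinset a) (a := (pw a).reverse.getVert 1)
    rw [card_neighborFinset_eq_degree] at this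
    omega
  obtain ⟨b, hb⟩ := Finset.card_pos.mp hcard
  have hbw : b ≠ (pw a).reverse.getVert 1 := (Finset.mem_erase.mp hb).1
  have hab : G.Adj a b := by
    have := (Finset.mem_erase.mp hb).2
    rwa [mem_neighborFinset] at this
  have hbp : b ∉ (pw a).support := by
    intro hmem
    exact hbw (tree_getVert_one hT hpa.reverse hab
      (by rwa [Walk.support_reverse, List.mem_reverse])).symm
  have hq : ((pw a).append (Walk.cons hab Walk.nil)).IsPath := by
    rw [Walk.isPath_def, Walk.support_append, Walk.support_cons, Walk.support_nil,
      List.tail_cons, List.nodup_append]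
    refine ⟨hpa.support_nodup, List.nodup_singleton b, ?_⟩
    intro x hx y hx' hxy
    rw [List.mem_singleton] at hx'
    exact hbp (by rw [← hx', ← hxy]; exact hx)
  have hpwb : pw b = (pw a).append (Walk.cons hab Walk.nil) := ((hspec b).2 _ hq).symm
  have hfb : f b = (pw a).length + 1 := by
    rw [hf]
    simp only [hpwb]
    rw [if_pos, Walk.length_append, Walk.length_cons, Walk.length_nil]
    rw [Walk.support_append]
    exact List.mem_append_left _ hu1a
  have hfa : f a = (pw a).length := if_pos hu1a
  have := hmax b (Finset.mem_univ b)
  omega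

/-- In a finite tree in which every non-leaf vertex has degree at least 3, for every edge
`e = s(u,v)` with both endpoints non-leaves there exist leaves `a, b, c, d` such that the
paths from `a` to `b` and from `c` to `d` both contain `e` and have no other common edge. -/
theorem internal_edge_double_ratio {V : Type} [Fintype V] [DecidableEq V]
    (G : SimpleGraph V) [DecidableRel G.Adj] (hT : G.IsTree)
    (hdeg : ∀ x, G.degree x ≠ 1 → 3 ≤ G.degree x)
    (u v : V) (huv : G.Adj u v) (hu : G.degree u ≠ 1) (hv : G.degree v ≠ 1) :
    ∃ a b c d : V,
      G.degree a = 1 ∧ G.degree b = 1 ∧ G.degree c = 1 ∧ G.degree d = 1 ∧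
      ∃ (P : G.Walk a b) (Q : G.Walk c d), P.IsPath ∧ Q.IsPath ∧
        s(u, v) ∈ P.edges ∧ s(u, v) ∈ Q.edges ∧
        ∀ e ∈ P.edges, e ∈ Q.edges → e = s(u, v) := by
  classical
  -- choose two distinct neighbors of `u` other than `v`
  have hcu : 1 < ((G.neighborFinset u).erase v).card := by
    have h3 : 3 ≤ G.degree u := hdeg u hu
    have := Finset.pred_card_le_card_erase (s := G.neighborFinset u) (a := v)
    rw [card_neighborFinset_eq_degree] at this
    omega
  obtain ⟨u1, hu1, u2, hu2, h12⟩ := Finset.one_lt_card.mp hcu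
  obtain ⟨hu1v, hu1adj⟩ := Finset.mem_erase.mp hu1
  obtain ⟨hu2v, hu2adj⟩ := Finset.mem_erase.mp hu2
  rw [mem_neighborFinset] at hu1adj hu2adj
  -- choose two distinct neighbors of `v` other than `u`
  have hcv : 1 < ((G.neighborFinset v).erase u).card := by
    have h3 : 3 ≤ G.degree v := hdeg v hv
    have := Finset.pred_card_le_card_erase (s := G.neighborFinset v) (a := u)
    rw [card_neighborFinset_eq_degree] at this
    omega
  obtain ⟨v1, hv1, v2, hv2, h34⟩ := Finset.one_lt_card.mp hcv
  obtain ⟨hv1u, hv1adj⟩ := Finset.mem_erase.mp hv1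
  obtain ⟨hv2u, hv2adj⟩ := Finset.mem_erase.mp hv2
  rw [mem_neighborFinset] at hv1adj hv2adj
  -- leaf paths
  obtain ⟨a, pa, hda, hpa, hga⟩ := exists_leaf_path hT hdeg hu1adj
  obtain ⟨b, pb, hdb, hpb, hgb⟩ := exists_leaf_path hT hdeg hu2adj
  obtain ⟨c, pc, hdc, hpc, hgc⟩ := exists_leaf_path hT hdeg hv1adj
  obtain ⟨d, pd, hdd, hpd, hgd⟩ := exists_leaf_path hT hdeg hv2adj
  -- second-vertex facts
  have hgav : pa.getVert 1 ≠ v := hga ▸ hu1v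
  have hgbv : pb.getVert 1 ≠ v := hgb ▸ hu2v
  have hgcu : pc.getVert 1 ≠ u := hgc ▸ hv1u
  have hgdu : pd.getVert 1 ≠ u := hgd ▸ hv2u
  have hgab : pa.getVert 1 ≠ pb.getVert 1 := by rw [hga, hgb]; exact h12
  have hgcd : pc.getVert 1 ≠ pd.getVert 1 := by rw [hgc, hgd]; exact h34
  -- the two paths
  refine ⟨a, c, b, d, hda, hdc, hdb, hdd,
    pa.reverse.append (Walk.cons huv pc), pb.reverse.append (Walk.cons huv pd), ?_, ?_, ?_, ?_, ?_⟩
  · rw [Walk.isPath_def, Walk.support_append, Walk.support_cons, List.tail_cons,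
      Walk.support_reverse, List.nodup_append]
    refine ⟨List.nodup_reverse.mpr hpa.support_nodup, hpc.support_nodup, ?_⟩
    intro x hx y hx' hxy
    subst hxy
    exact tree_cross_side hT huv hpa hpc hgav hgcu (List.mem_reverse.mp hx) hx'
  · rw [Walk.isPath_def, Walk.support_append, Walk.support_cons, List.tail_cons,
      Walk.support_reverse, List.nodup_append]
    refine ⟨List.nodup_reverse.mpr hpb.support_nodup, hpd.support_nodup, ?_⟩
    intro x hx y hx' hxy
    subst hxy
    exact tree_cross_side hT huv hpb hpd hgbv hgdu (List.mem_reverse.mp hx) hx'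
  · rw [Walk.edges_append, Walk.edges_cons]
    exact List.mem_append_right _ List.mem_cons_self
  · rw [Walk.edges_append, Walk.edges_cons]
    exact List.mem_append_right _ List.mem_cons_self
  · intro e heP heQ
    rw [Walk.edges_append, Walk.edges_cons, Walk.edges_reverse, List.mem_append,
      List.mem_reverse, List.mem_cons] at heP heQ
    rcases heP with hePa | hePuv | hePc
    · rcases heQ with heQb | heQuv | heQd
      · exact absurd heQb (fun h => tree_same_side_edges hT hpa hpb hgab hePa h)
      · exfalso
        rw [heQuv] at hePa
        exact hgav (tree_getVert_one hT hpa huv (pa.snd_mem_support_of_mem_edges hePa))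
      · exfalso
        induction e with
        | _ x y =>
          exact tree_cross_side hT huv hpa hpd hgav hgdu
            (pa.fst_mem_support_of_mem_edges hePa) (pd.fst_mem_support_of_mem_edges heQd)
    · exact hePuv
    · rcases heQ with heQb | heQuv | heQd
      · exfalso
        induction e with
        | _ x y =>
          exact tree_cross_side hT huv hpb hpc hgbv hgcu
            (pb.fst_mem_support_of_mem_edges heQb) (pc.fst_mem_support_of_mem_edges hePc)
      · exfalso
        rw [heQuv, Sym2.eq_swap] at hePc
        exact hgcu (tree_getVert_one hT hpc huv.symm (pc.snd_mem_support_of_mem_edges hePc))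
      · exact absurd heQd (fun h => tree_same_side_edges hT hpc hpd hgcd hePc h)
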